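/- Let g ≥ 1 and let m be a positive integer. There exists a matrix A in Sp(2g,ℤ) with A ≠ I and A^m = I if and only if there exists a prime p dividing m with p ≤ 2g+1. -/

import Mathlib

open Matrix

/-- The standard symplectic form matrix `J = [[0, I_g], [-I_g, 0]]` (as a block matrix). -/
def SpJ (g : ℕ) : Matrix (Fin g ⊕ Fin g) (Fin g ⊕ Fin g) ℤ :=
  Matrix.fromBlocks 0 1 (-1) 0

/-- `A` belongs to `Sp(2g, ℤ)`, i.e. `Aᵀ J A = J`. -/
def IsSymplectic (g : ℕ) (A : Matrix (Fin g ⊕ Fin g) (Fin g ⊕ Fin g) ℤ) : Prop :=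
  Aᵀ * SpJ g * A = SpJ g

namespace SympAux

lemma altIco (a b : ℕ) : ∑ t ∈ Finset.Ico a b, (-1:ℤ)^t =
    if a < b ∧ (a+b) % 2 = 1 then (if a % 2 = 0 then 1 else -1) else 0 := by
  induction b with
  | zero => simp
  | succ b ih =>
    rcases le_or_gt a b with hab | hab
    · rw [Finset.sum_Ico_succ_top hab, ih]
      have hb2 : ((-1:ℤ))^b = if b % 2 = 0 then 1 else -1 := by
        rcases Nat.even_or_odd b with hb | hb
        · rw [hb.neg_one_pow, if_pos (Nat.even_iff.mp hb)]
        · rw [hb.neg_one_pow, if_neg (by simp [Nat.odd_iff.mp hb])]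
      rw [hb2]
      split_ifs <;> omega
    · rw [Finset.Ico_eq_empty (by omega), Finset.sum_empty, if_neg (by omega)]

lemma filter_range (N a b : ℕ) :
    (Finset.range N).filter (fun t => a ≤ t ∧ t < b) = Finset.Ico a (min b N) := by
  ext t
  simp only [Finset.mem_filter, Finset.mem_range, Finset.mem_Ico]
  omega

lemma sum_alt (N a b : ℕ) :
    ∑ t ∈ Finset.range N, (if a ≤ t ∧ t < b then (-1:ℤ)^t else 0)
      = if a < min b N ∧ (a + min b N) % 2 = 1 then (if a % 2 = 0 then 1 else -1) else 0 := by
  rw [← Finset.sum_filter, filter_range, altIco]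

lemma sum_ite_point {N : ℕ} (Q : ℕ → Prop) [DecidablePred Q] (x : ℤ) (Pr : Prop) [Decidable Pr]
    (a : ℕ) (h1 : Pr → a < N ∧ Q a) (h2 : ∀ t < N, Q t → Pr ∧ t = a) :
    (∑ t ∈ Finset.range N, if Q t then x else 0) = if Pr then x else 0 := by
  by_cases hP : Pr
  · obtain ⟨haN, hQa⟩ := h1 hP
    rw [if_pos hP, Finset.sum_eq_single_of_mem a (Finset.mem_range.mpr haN), if_pos hQa]
    intro b hb hba
    rw [Finset.mem_range] at hb
    rw [if_neg (fun hc => hba ((h2 b hb hc).2))]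
  · rw [if_neg hP]
    apply Finset.sum_eq_zero
    intro t ht
    rw [Finset.mem_range] at ht
    rw [if_neg (fun hc => hP ((h2 t ht hc).1))]

lemma sum_ite_point' {N : ℕ} (f : ℕ → ℤ) (a : ℕ) (ha : a < N) :
    (∑ t ∈ Finset.range N, if t = a then f t else 0) = f a := by
  rw [Finset.sum_ite_eq' (Finset.range N) a f, if_pos (Finset.mem_range.mpr ha)]

lemma neg_one_pow_mod (t : ℕ) : (-1:ℤ)^t = if t % 2 = 0 then 1 else -1 := by
  rcases Nat.even_or_odd t with h | h
  · rw [h.neg_one_pow, if_pos (Nat.even_iff.mp h)]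
  · rw [h.neg_one_pow, if_neg (by simp [Nat.odd_iff.mp h])]

lemma one_apply_val {q : ℕ} (l k : Fin q) :
    (1 : Matrix (Fin q) (Fin q) ℤ) l k = if l.val = k.val then 1 else 0 := by
  rw [Matrix.one_apply]
  exact if_congr Fin.ext_iff rfl rfl

variable (n : ℕ)

def pcol : (Fin n ⊕ Fin n) → ℕ → ℤ
  | Sum.inl k, t => (if t = 2*k.val then 1 else 0) - (if t = 2*k.val+1 then 1 else 0)
  | Sum.inr k, t => if 2*k.val+1 ≤ t then (-1:ℤ)^(t+1) else 0

def P : Matrix (Fin (2*n+1)) (Fin n ⊕ Fin n) ℤ := fun i c => pcol n c i.val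

def B : Matrix (Fin (2*n+1)) (Fin (2*n+1)) ℤ :=
  fun i j => (if i.val < j.val then 1 else 0) - (if j.val < i.val then 1 else 0)

def bpcol : (Fin n ⊕ Fin n) → ℕ → ℤ
  | Sum.inl k, t => -(if t = 2*k.val then 1 else 0) - (if t = 2*k.val+1 then 1 else 0)
  | Sum.inr k, t => -(if 2*k.val+1 ≤ t then 1 else 0)

def S : Matrix (Fin n ⊕ Fin n) (Fin n ⊕ Fin n) ℤ :=
  fun d c => match d, c with
  | Sum.inl _, Sum.inl _ => 0
  | Sum.inr j, Sum.inl k => (if j.val = k.val then 1 else 0) - (if j.val = k.val + 1 then 1 else 0)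
  | Sum.inl j, Sum.inr k => -(if j.val ≤ k.val then 1 else 0)
  | Sum.inr j, Sum.inr _ => -(if j.val = 0 then 1 else 0)

lemma colsum (c : Fin n ⊕ Fin n) : ∑ i : Fin (2*n+1), P n i c = 0 := by
  have hconv : ∑ i : Fin (2*n+1), P n i c = ∑ t ∈ Finset.range (2*n+1), pcol n c t :=
    Fin.sum_univ_eq_sum_range (fun t => pcol n c t) (2*n+1)
  rw [hconv]
  rcases c with k | k <;> have hk := k.isLt
  · have h1 : ∀ t, pcol n (Sum.inl k) t
        = (if t = 2*k.val then (1:ℤ) else 0) - (if t = 2*k.val+1 then 1 else 0) := fun t => rfl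
    simp only [h1]
    rw [Finset.sum_sub_distrib, sum_ite_point' (fun _ => (1:ℤ)) (2*k.val) (by omega),
      sum_ite_point' (fun _ => (1:ℤ)) (2*k.val+1) (by omega)]
    ring
  · have h1 : ∀ t ∈ Finset.range (2*n+1), pcol n (Sum.inr k) t
        = -(if 2*k.val+1 ≤ t ∧ t < 2*n+1 then (-1:ℤ)^t else 0) := by
      intro t ht
      rw [Finset.mem_range] at ht
      show (if 2*k.val+1 ≤ t then (-1:ℤ)^(t+1) else 0) = _
      simp only [pow_succ]
      split_ifs <;> (first | ring1 | (exfalso; omega))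
    rw [Finset.sum_congr rfl h1, Finset.sum_neg_distrib, sum_alt, min_self,
      if_neg (by omega), neg_zero]

lemma BP_apply (j : Fin (2*n+1)) (c : Fin n ⊕ Fin n) :
    (B n * P n) j c = bpcol n c j.val := by
  rw [Matrix.mul_apply]
  have hj := j.isLt
  have hconv : ∑ i : Fin (2*n+1), B n j i * P n i c
      = ∑ t ∈ Finset.range (2*n+1),
          ((if j.val < t then (1:ℤ) else 0) - (if t < j.val then 1 else 0)) * pcol n c t :=
    Fin.sum_univ_eq_sum_range
      (fun t => ((if j.val < t then (1:ℤ) else 0) - (if t < j.val then 1 else 0)) * pcol n c t)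
      (2*n+1)
  rw [hconv]
  rcases c with k | k <;> have hk := k.isLt
  · have h1 : ∀ t, ((if j.val < t then (1:ℤ) else 0) - (if t < j.val then 1 else 0))
          * pcol n (Sum.inl k) t
        = (if t = 2*k.val then ((if j.val < t then (1:ℤ) else 0) - (if t < j.val then 1 else 0)) else 0)
          - (if t = 2*k.val+1 then ((if j.val < t then (1:ℤ) else 0) - (if t < j.val then 1 else 0)) else 0) := by
      intro t
      show _ * ((if t = 2*k.val then (1:ℤ) else 0) - (if t = 2*k.val+1 then 1 else 0)) = _
      split_ifs <;> ring
    rw [Finset.sum_congr rfl (fun t _ => h1 t), Finset.sum_sub_distrib,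
      sum_ite_point' _ (2*k.val) (by omega), sum_ite_point' _ (2*k.val+1) (by omega)]
    show _ = -(if j.val = 2*k.val then (1:ℤ) else 0) - (if j.val = 2*k.val+1 then 1 else 0)
    split_ifs <;> omega
  · have h1 : ∀ t ∈ Finset.range (2*n+1),
        ((if j.val < t then (1:ℤ) else 0) - (if t < j.val then 1 else 0)) * pcol n (Sum.inr k) t
        = (if max (2*k.val+1) (j.val+1) ≤ t ∧ t < 2*n+1 then (-1:ℤ)^(t+1) else 0)
          - (if 2*k.val+1 ≤ t ∧ t < j.val then (-1:ℤ)^(t+1) else 0) := by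
      intro t ht
      rw [Finset.mem_range] at ht
      show _ * (if 2*k.val+1 ≤ t then (-1:ℤ)^(t+1) else 0) = _
      split_ifs <;> (first | ring1 | (exfalso; omega))
    rw [Finset.sum_congr rfl h1, Finset.sum_sub_distrib]
    have h2 : ∀ t, (-1:ℤ)^(t+1) = -(-1:ℤ)^t := by intro t; rw [pow_succ]; ring
    simp only [h2]
    have h3 : ∀ (a b : ℕ), ∑ t ∈ Finset.range (2*n+1),
        (if a ≤ t ∧ t < b then -(-1:ℤ)^t else 0)
        = -(if a < min b (2*n+1) ∧ (a + min b (2*n+1)) % 2 = 1 then (if a % 2 = 0 then (1:ℤ) else -1) else 0) := by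
      intro a b
      rw [← sum_alt, ← Finset.sum_neg_distrib]
      apply Finset.sum_congr rfl
      intro t _
      split_ifs <;> ring
    rw [h3, h3]
    show _ = -(if 2*k.val+1 ≤ j.val then (1:ℤ) else 0)
    have hje : min (j.val) (2*n+1) = j.val := by omega
    rw [min_self, hje]
    split_ifs <;> omega

lemma SpJ_ll {q : ℕ} (l k : Fin q) : SpJ q (Sum.inl l) (Sum.inl k) = 0 := rfl

lemma SpJ_lr {q : ℕ} (l k : Fin q) :
    SpJ q (Sum.inl l) (Sum.inr k) = if l.val = k.val then 1 else 0 := by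
  show (1 : Matrix (Fin q) (Fin q) ℤ) l k = _
  exact one_apply_val l k

lemma SpJ_rl {q : ℕ} (l k : Fin q) :
    SpJ q (Sum.inr l) (Sum.inl k) = -(if l.val = k.val then 1 else 0) := by
  show (-1 : Matrix (Fin q) (Fin q) ℤ) l k = _
  rw [Matrix.neg_apply, one_apply_val]

lemma SpJ_rr {q : ℕ} (l k : Fin q) : SpJ q (Sum.inr l) (Sum.inr k) = 0 := rfl

lemma PBP : (P n)ᵀ * B n * P n = SpJ n := by
  rw [Matrix.mul_assoc]
  ext c d
  rw [Matrix.mul_apply]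
  have h0 : ∀ i : Fin (2*n+1), (P n)ᵀ c i * (B n * P n) i d
      = pcol n c i.val * bpcol n d i.val := by
    intro i
    rw [Matrix.transpose_apply, BP_apply]
    rfl
  simp only [h0]
  have hconv : ∑ i : Fin (2*n+1), pcol n c i.val * bpcol n d i.val
      = ∑ t ∈ Finset.range (2*n+1), pcol n c t * bpcol n d t :=
    Fin.sum_univ_eq_sum_range (fun t => pcol n c t * bpcol n d t) (2*n+1)
  rw [hconv]
  rcases c with l | l
  · -- row index from the first (a) family
    have hl := l.isLt
    have hgen : ∀ t, pcol n (Sum.inl l) t * bpcol n d t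
        = (if t = 2*l.val then bpcol n d t else 0) - (if t = 2*l.val+1 then bpcol n d t else 0) := by
      intro t
      show ((if t = 2*l.val then (1:ℤ) else 0) - (if t = 2*l.val+1 then 1 else 0)) * _ = _
      split_ifs <;> ring1
    rw [Finset.sum_congr rfl (fun t _ => hgen t), Finset.sum_sub_distrib,
      sum_ite_point' _ (2*l.val) (by omega), sum_ite_point' _ (2*l.val+1) (by omega)]
    rcases d with k | k <;> have hk := k.isLt
    · rw [SpJ_ll]
      show (-(if 2*l.val = 2*k.val then (1:ℤ) else 0) - (if 2*l.val = 2*k.val+1 then 1 else 0))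
        - (-(if 2*l.val+1 = 2*k.val then (1:ℤ) else 0) - (if 2*l.val+1 = 2*k.val+1 then 1 else 0)) = 0
      split_ifs <;> omega
    · rw [SpJ_lr]
      show (-(if 2*k.val+1 ≤ 2*l.val then (1:ℤ) else 0))
        - (-(if 2*k.val+1 ≤ 2*l.val+1 then (1:ℤ) else 0)) = _
      split_ifs <;> omega
  · have hl := l.isLt
    rcases d with k | k <;> have hk := k.isLt
    · have hgen : ∀ t, pcol n (Sum.inr l) t * bpcol n (Sum.inl k) t
          = (-(if t = 2*k.val then pcol n (Sum.inr l) t else 0))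
            - (if t = 2*k.val+1 then pcol n (Sum.inr l) t else 0) := by
        intro t
        show _ * (-(if t = 2*k.val then (1:ℤ) else 0) - (if t = 2*k.val+1 then 1 else 0)) = _
        split_ifs <;> ring1
      rw [Finset.sum_congr rfl (fun t _ => hgen t), Finset.sum_sub_distrib,
        Finset.sum_neg_distrib, sum_ite_point' _ (2*k.val) (by omega),
        sum_ite_point' _ (2*k.val+1) (by omega), SpJ_rl]
      show -(if 2*l.val+1 ≤ 2*k.val then (-1:ℤ)^(2*k.val+1) else 0)
        - (if 2*l.val+1 ≤ 2*k.val+1 then (-1:ℤ)^(2*k.val+1+1) else 0) = _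
      simp only [neg_one_pow_mod]
      split_ifs <;> omega
    · have hgen : ∀ t ∈ Finset.range (2*n+1), pcol n (Sum.inr l) t * bpcol n (Sum.inr k) t
          = (if max (2*l.val+1) (2*k.val+1) ≤ t ∧ t < 2*n+1 then (-1:ℤ)^t else 0) := by
        intro t ht
        rw [Finset.mem_range] at ht
        show (if 2*l.val+1 ≤ t then (-1:ℤ)^(t+1) else 0)
          * (-(if 2*k.val+1 ≤ t then (1:ℤ) else 0)) = _
        simp only [pow_succ]
        split_ifs <;> (first | ring1 | (exfalso; omega))
      rw [Finset.sum_congr rfl hgen, sum_alt, min_self, SpJ_rr, if_neg (by omega)]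

lemma PS_apply (hn : 0 < n) (i j : Fin (2*n+1))
    (hij : (j.val < 2*n ∧ i.val = j.val + 1) ∨ (j.val = 2*n ∧ i.val = 0))
    (c : Fin n ⊕ Fin n) : (P n * S n) i c = P n j c := by
  have hi := i.isLt
  have hj := j.isLt
  rw [Matrix.mul_apply, Fintype.sum_sum_type]
  rcases c with k | k <;> have hk := k.isLt
  · have e1 : ∀ a : Fin n, P n i (Sum.inl a) * S n (Sum.inl a) (Sum.inl k) = 0 := by
      intro a
      show _ * (0:ℤ) = 0
      exact mul_zero _
    rw [Finset.sum_congr rfl (fun a _ => e1 a), Finset.sum_const_zero, zero_add]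
    have hconv : ∑ b : Fin n, P n i (Sum.inr b) * S n (Sum.inr b) (Sum.inl k)
        = ∑ t ∈ Finset.range n, (if 2*t+1 ≤ i.val then (-1:ℤ)^(i.val+1) else 0) *
            ((if t = k.val then (1:ℤ) else 0) - (if t = k.val+1 then 1 else 0)) :=
      Fin.sum_univ_eq_sum_range (fun t => (if 2*t+1 ≤ i.val then (-1:ℤ)^(i.val+1) else 0) *
            ((if t = k.val then (1:ℤ) else 0) - (if t = k.val+1 then 1 else 0))) n
    rw [hconv]
    have hdec : ∀ t ∈ Finset.range n, (if 2*t+1 ≤ i.val then (-1:ℤ)^(i.val+1) else 0) *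
            ((if t = k.val then (1:ℤ) else 0) - (if t = k.val+1 then 1 else 0))
        = (if t = k.val ∧ 2*t+1 ≤ i.val then (-1:ℤ)^(i.val+1) else 0)
          - (if t = k.val+1 ∧ 2*t+1 ≤ i.val then (-1:ℤ)^(i.val+1) else 0) := by
      intro t _
      split_ifs <;> (first | ring1 | (exfalso; omega))
    rw [Finset.sum_congr rfl hdec, Finset.sum_sub_distrib,
      sum_ite_point _ _ (2*k.val+1 ≤ i.val) k.val (by omega) (by omega),
      sum_ite_point _ _ (k.val+1 < n ∧ 2*k.val+3 ≤ i.val) (k.val+1) (by omega) (by omega)]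
    show _ = (if j.val = 2*k.val then (1:ℤ) else 0) - (if j.val = 2*k.val+1 then 1 else 0)
    simp only [neg_one_pow_mod]
    split_ifs <;> omega
  · have hconv : ∑ a : Fin n, P n i (Sum.inl a) * S n (Sum.inl a) (Sum.inr k)
        = ∑ t ∈ Finset.range n, ((if i.val = 2*t then (1:ℤ) else 0) - (if i.val = 2*t+1 then 1 else 0)) *
            (-(if t ≤ k.val then (1:ℤ) else 0)) :=
      Fin.sum_univ_eq_sum_range (fun t => ((if i.val = 2*t then (1:ℤ) else 0) - (if i.val = 2*t+1 then 1 else 0)) *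
            (-(if t ≤ k.val then (1:ℤ) else 0))) n
    have hconv2 : ∑ b : Fin n, P n i (Sum.inr b) * S n (Sum.inr b) (Sum.inr k)
        = ∑ t ∈ Finset.range n, (if 2*t+1 ≤ i.val then (-1:ℤ)^(i.val+1) else 0) *
            (-(if t = 0 then (1:ℤ) else 0)) :=
      Fin.sum_univ_eq_sum_range (fun t => (if 2*t+1 ≤ i.val then (-1:ℤ)^(i.val+1) else 0) *
            (-(if t = 0 then (1:ℤ) else 0))) n
    rw [hconv, hconv2]
    have hdec : ∀ t ∈ Finset.range n, ((if i.val = 2*t then (1:ℤ) else 0) - (if i.val = 2*t+1 then 1 else 0)) *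
            (-(if t ≤ k.val then (1:ℤ) else 0))
        = (if t ≤ k.val ∧ i.val = 2*t+1 then (1:ℤ) else 0)
          - (if t ≤ k.val ∧ i.val = 2*t then (1:ℤ) else 0) := by
      intro t _
      split_ifs <;> (first | ring1 | (exfalso; omega))
    have hdec2 : ∀ t ∈ Finset.range n, (if 2*t+1 ≤ i.val then (-1:ℤ)^(i.val+1) else 0) *
            (-(if t = 0 then (1:ℤ) else 0))
        = -(if t = 0 ∧ 1 ≤ i.val then (-1:ℤ)^(i.val+1) else 0) := by
      intro t _
      split_ifs <;> (first | ring1 | (exfalso; omega))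
    rw [Finset.sum_congr rfl hdec, Finset.sum_congr rfl hdec2, Finset.sum_sub_distrib,
      Finset.sum_neg_distrib,
      sum_ite_point _ _ (i.val % 2 = 1 ∧ i.val ≤ 2*k.val+1) (i.val/2) (by omega) (by omega),
      sum_ite_point _ _ (i.val % 2 = 0 ∧ i.val ≤ 2*k.val) (i.val/2) (by omega) (by omega),
      sum_ite_point _ _ (1 ≤ i.val) 0 (by omega) (by omega)]
    show _ = (if 2*k.val+1 ≤ j.val then (-1:ℤ)^(j.val+1) else 0)
    simp only [neg_one_pow_mod]
    split_ifs <;> omega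

def w : Fin (2*n+1) → ℤ := fun i => if i.val = 2*n then 1 else 0

lemma rot_val (i : Fin (2*n+1)) :
    (finRotate (2*n+1) i).val = if i.val = 2*n then 0 else i.val + 1 := by
  rw [finRotate_succ_apply, Fin.val_add_one]
  have hlast : (Fin.last (2*n)).val = 2*n := rfl
  by_cases h : i = Fin.last (2*n)
  · rw [if_pos h, if_pos (by rw [h, hlast])]
  · rw [if_neg h, if_neg ?_]
    intro hc
    exact h (Fin.ext (hc.trans hlast.symm))

lemma Bshift (i j : Fin (2*n+1)) :
    B n (finRotate (2*n+1) i) (finRotate (2*n+1) j)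
      = B n i j + 2 * w n i - 2 * w n j := by
  have hi := i.isLt
  have hj := j.isLt
  show (if (finRotate (2*n+1) i).val < (finRotate (2*n+1) j).val then (1:ℤ) else 0)
      - (if (finRotate (2*n+1) j).val < (finRotate (2*n+1) i).val then 1 else 0)
    = ((if i.val < j.val then (1:ℤ) else 0) - (if j.val < i.val then 1 else 0))
      + 2 * (if i.val = 2*n then 1 else 0) - 2 * (if j.val = 2*n then 1 else 0)
  rw [rot_val, rot_val]
  split_ifs <;> omega

def Bcorr : Matrix (Fin (2*n+1)) (Fin (2*n+1)) ℤ :=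
  fun i j => B n i j + 2 * w n i - 2 * w n j

lemma Bsub : (B n).submatrix ⇑(finRotate (2*n+1)) ⇑(finRotate (2*n+1)) = Bcorr n := by
  ext i j
  rw [Matrix.submatrix_apply]
  exact Bshift n i j

lemma PBcorrP : (P n)ᵀ * Bcorr n * P n = (P n)ᵀ * B n * P n := by
  have hBcorrP : ∀ i d, (Bcorr n * P n) i d
      = (B n * P n) i d - 2 * (∑ j, w n j * P n j d) := by
    intro i d
    rw [Matrix.mul_apply, Matrix.mul_apply]
    have h1 : ∀ j, Bcorr n i j * P n j d
        = B n i j * P n j d + (2 * w n i) * P n j d - 2 * (w n j * P n j d) := by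
      intro j
      show (B n i j + 2 * w n i - 2 * w n j) * P n j d = _
      ring1
    simp only [h1]
    rw [Finset.sum_sub_distrib, Finset.sum_add_distrib, ← Finset.mul_sum, ← Finset.mul_sum,
      colsum, mul_zero, add_zero]
  rw [Matrix.mul_assoc, Matrix.mul_assoc]
  ext c d
  rw [Matrix.mul_apply, Matrix.mul_apply]
  have h2 : ∀ i, (P n)ᵀ c i * (Bcorr n * P n) i d
      = (P n)ᵀ c i * (B n * P n) i d - (2 * (∑ j, w n j * P n j d)) * P n i c := by
    intro i
    rw [hBcorrP, Matrix.transpose_apply]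
    ring1
  simp only [h2]
  rw [Finset.sum_sub_distrib, ← Finset.mul_sum, colsum, mul_zero, sub_zero]

lemma submatrix_mul_id {α β γ : Type*} [Fintype β] (f : α → α)
    (X : Matrix α β ℤ) (Y : Matrix β γ ℤ) :
    (X.submatrix f id) * Y = (X * Y).submatrix f id := by
  ext i c
  simp [Matrix.mul_apply, Matrix.submatrix_apply]

lemma hPS (hn : 0 < n) : P n * S n = (P n).submatrix ⇑(finRotate (2*n+1))⁻¹ id := by
  ext i c
  rw [Matrix.submatrix_apply, id_eq]
  apply PS_apply n hn i ((finRotate (2*n+1))⁻¹ i)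
  have h1 := rot_val n ((finRotate (2*n+1))⁻¹ i)
  rw [show (finRotate (2*n+1)) ((finRotate (2*n+1))⁻¹ i) = i from Equiv.apply_symm_apply _ i] at h1
  have h2 := ((finRotate (2*n+1))⁻¹ i).isLt
  have h3 := i.isLt
  split_ifs at h1 <;> omega

lemma subBP (hn : 0 < n) :
    ((P n).submatrix ⇑(finRotate (2*n+1))⁻¹ id)ᵀ * B n * ((P n).submatrix ⇑(finRotate (2*n+1))⁻¹ id)
      = SpJ n := by
  set σ := finRotate (2*n+1) with hσ
  have hcomp : ⇑σ ∘ ⇑σ⁻¹ = id := funext (fun x => Equiv.apply_symm_apply σ x)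
  have hB : B n = ((B n).submatrix ⇑σ ⇑σ).submatrix ⇑σ⁻¹ ⇑σ⁻¹ := by
    rw [Matrix.submatrix_submatrix, hcomp, Matrix.submatrix_id_id]
  rw [Matrix.transpose_submatrix, hB,
    Matrix.submatrix_mul_equiv ((P n)ᵀ) ((B n).submatrix ⇑σ ⇑σ) id σ⁻¹ ⇑σ⁻¹,
    Matrix.submatrix_mul_equiv ((P n)ᵀ * (B n).submatrix ⇑σ ⇑σ) (P n) id σ⁻¹ id,
    Matrix.submatrix_id_id, Bsub, PBcorrP, PBP]

lemma SJS (hn : 0 < n) : (S n)ᵀ * SpJ n * S n = SpJ n := by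
  have h1 : (S n)ᵀ * SpJ n * S n = (P n * S n)ᵀ * B n * (P n * S n) := by
    rw [← PBP]
    simp only [Matrix.transpose_mul, Matrix.mul_assoc]
  rw [h1, hPS n hn, subBP n hn]

open Fin.NatCast in
lemma rot_pow_eq_one : (finRotate (2*n+1))^(2*n+1) = 1 := by
  have key : ∀ (k : ℕ) (i : Fin (2*n+1)), ((finRotate (2*n+1))^k) i = i + (k : Fin (2*n+1)) := by
    intro k
    induction k with
    | zero => intro i; simp
    | succ k ih =>
      intro i
      rw [pow_succ, Equiv.Perm.mul_apply, ih (finRotate (2*n+1) i), finRotate_succ_apply,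
        Nat.cast_add, Nat.cast_one, add_assoc, add_comm 1 (k : Fin (2*n+1))]
  ext i
  rw [key (2*n+1) i]
  simp [Fin.natCast_self]

lemma Ppow (hn : 0 < n) (k : ℕ) :
    P n * (S n)^k = (P n).submatrix ⇑((finRotate (2*n+1))⁻¹ ^ k) id := by
  induction k with
  | zero => rw [pow_zero, pow_zero, Matrix.mul_one, Equiv.Perm.coe_one, Matrix.submatrix_id_id]
  | succ k ih =>
    have hcoe : ⇑((finRotate (2*n+1))⁻¹ ^ k) ∘ ⇑(finRotate (2*n+1))⁻¹
        = ⇑((finRotate (2*n+1))⁻¹ ^ (k+1)) := by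
      funext x
      rw [Function.comp_apply, ← Equiv.Perm.mul_apply, ← pow_succ]
    rw [pow_succ', ← Matrix.mul_assoc, hPS n hn, submatrix_mul_id, ih,
      Matrix.submatrix_submatrix, hcoe]
    rfl

lemma JJ : SpJ n * SpJ n = -1 := by
  ext i j
  rcases i with i | i <;> rcases j with j | j <;>
    simp [SpJ, Matrix.fromBlocks_multiply, Matrix.one_apply]

lemma Spow_eq_one (hn : 0 < n) : (S n)^(2*n+1) = 1 := by
  have h1 : P n * (S n)^(2*n+1) = P n := by
    rw [Ppow n hn, inv_pow, rot_pow_eq_one, inv_one, Equiv.Perm.coe_one, Matrix.submatrix_id_id]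
  have h2 : SpJ n * (S n)^(2*n+1) = SpJ n := by
    calc SpJ n * (S n)^(2*n+1) = ((P n)ᵀ * B n * P n) * (S n)^(2*n+1) := by rw [PBP]
    _ = (P n)ᵀ * B n * (P n * (S n)^(2*n+1)) := by rw [Matrix.mul_assoc]
    _ = (P n)ᵀ * B n * P n := by rw [h1]
    _ = SpJ n := PBP n
  calc (S n)^(2*n+1) = 1 * (S n)^(2*n+1) := (Matrix.one_mul _).symm
  _ = (-(SpJ n * SpJ n)) * (S n)^(2*n+1) := by rw [JJ, neg_neg]
  _ = -(SpJ n * (SpJ n * (S n)^(2*n+1))) := by rw [Matrix.neg_mul, Matrix.mul_assoc]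
  _ = -(SpJ n * SpJ n) := by rw [h2]
  _ = 1 := by rw [JJ, neg_neg]

lemma S_ne_one (hn : 0 < n) : S n ≠ 1 := by
  intro h
  have h1 := congrFun (congrFun h (Sum.inl (⟨0, hn⟩ : Fin n))) (Sum.inl (⟨0, hn⟩ : Fin n))
  have h2 : S n (Sum.inl (⟨0, hn⟩ : Fin n)) (Sum.inl (⟨0, hn⟩ : Fin n)) = 0 := rfl
  rw [h2, Matrix.one_apply_eq] at h1
  exact zero_ne_one h1

section Embed

variable {n g : ℕ} (hng : n ≤ g)

/-- the tall rectangular "inclusion" matrix -/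
def E (_hng : n ≤ g) : Matrix (Fin g) (Fin n) ℤ := fun r c => if r.val = c.val then 1 else 0

/-- the block inclusion matrix -/
def Q (hng : n ≤ g) : Matrix (Fin g ⊕ Fin g) (Fin n ⊕ Fin n) ℤ :=
  Matrix.fromBlocks (E hng) 0 0 (E hng)

lemma ETE : (E hng)ᵀ * E hng = (1 : Matrix (Fin n) (Fin n) ℤ) := by
  ext c d
  rw [Matrix.mul_apply, Finset.sum_eq_single_of_mem (Fin.castLE hng c) (Finset.mem_univ _)]
  · show (if (Fin.castLE hng c).val = c.val then (1:ℤ) else 0)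
        * (if (Fin.castLE hng c).val = d.val then 1 else 0) = _
    rw [if_pos (show (Fin.castLE hng c).val = c.val from rfl), one_apply_val, one_mul]
    rfl
  · intro r _ hr
    show (if r.val = c.val then (1:ℤ) else 0) * _ = 0
    rw [if_neg (show ¬r.val = c.val from fun hc => hr (Fin.ext hc)), zero_mul]

lemma QTQ : (Q hng)ᵀ * Q hng = 1 := by
  rw [Q, Matrix.fromBlocks_transpose, Matrix.fromBlocks_multiply]
  simp [ETE hng, Matrix.fromBlocks_one]

lemma JQ : SpJ g * Q hng = Q hng * SpJ n := by
  rw [SpJ, SpJ, Q, Matrix.fromBlocks_multiply, Matrix.fromBlocks_multiply]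
  simp

lemma SpJ_transpose (q : ℕ) : (SpJ q)ᵀ = -SpJ q := by
  ext i j
  rcases i with i | i <;> rcases j with j | j <;>
    simp [SpJ, Matrix.fromBlocks_transpose, Matrix.one_apply, eq_comm]

lemma QJ : (Q hng)ᵀ * SpJ g = SpJ n * (Q hng)ᵀ := by
  have h := congrArg Matrix.transpose (JQ hng)
  rw [Matrix.transpose_mul, Matrix.transpose_mul, SpJ_transpose, SpJ_transpose,
    Matrix.mul_neg, Matrix.neg_mul] at h
  exact neg_inj.mp h

/-- the embedding `X ↦ 1 + Q (X - 1) Qᵀ` -/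
def emb (X : Matrix (Fin n ⊕ Fin n) (Fin n ⊕ Fin n) ℤ) :
    Matrix (Fin g ⊕ Fin g) (Fin g ⊕ Fin g) ℤ :=
  1 + Q hng * (X - 1) * (Q hng)ᵀ

lemma emb_mul_aux (x y : Matrix (Fin n ⊕ Fin n) (Fin n ⊕ Fin n) ℤ) :
    (1 + Q hng * x * (Q hng)ᵀ) * (1 + Q hng * y * (Q hng)ᵀ)
      = 1 + Q hng * (x + y + x * y) * (Q hng)ᵀ := by
  set U := Q hng
  set V := (Q hng)ᵀ
  have h2 : U*x*V*(U*y*V) = U*(x*y)*V := by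
    calc U*x*V*(U*y*V) = U*(x*((V*U)*(y*V))) := by simp only [Matrix.mul_assoc]
    _ = U*(x*(y*V)) := by rw [QTQ hng, Matrix.one_mul]
    _ = U*(x*y)*V := by simp only [Matrix.mul_assoc]
  calc (1 + U*x*V) * (1 + U*y*V)
      = 1*(1 + U*y*V) + U*x*V*(1 + U*y*V) := Matrix.add_mul _ _ _
  _ = 1 + U*y*V + (U*x*V + U*x*V*(U*y*V)) := by
      rw [Matrix.one_mul, Matrix.mul_add, Matrix.mul_one]
  _ = 1 + U*y*V + (U*x*V + U*(x*y)*V) := by rw [h2]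
  _ = 1 + U*(x + y + x*y)*V := by
      simp only [Matrix.add_mul, Matrix.mul_add]
      abel

lemma emb_pow (X : Matrix (Fin n ⊕ Fin n) (Fin n ⊕ Fin n) ℤ) (k : ℕ) :
    (emb hng X)^k = 1 + Q hng * (X^k - 1) * (Q hng)ᵀ := by
  induction k with
  | zero => simp [pow_zero]
  | succ k ih =>
    rw [pow_succ, ih, emb, emb_mul_aux hng]
    have h3 : (X^k - 1) + (X - 1) + (X^k - 1)*(X - 1) = X^(k+1) - 1 := by
      rw [pow_succ]
      noncomm_ring
    rw [h3]

lemma emb_symplectic (X : Matrix (Fin n ⊕ Fin n) (Fin n ⊕ Fin n) ℤ)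
    (hX : Xᵀ * SpJ n * X = SpJ n) : (emb hng X)ᵀ * SpJ g * emb hng X = SpJ g := by
  set U := Q hng with hU
  set V := (Q hng)ᵀ with hV
  have hVU : V * U = 1 := QTQ hng
  have hJU : SpJ g * U = U * SpJ n := JQ hng
  have hVJ : V * SpJ g = SpJ n * V := QJ hng
  have hTr : (emb hng X)ᵀ = 1 + U * (Xᵀ - 1) * V := by
    rw [emb, Matrix.transpose_add, Matrix.transpose_one, Matrix.transpose_mul,
      Matrix.transpose_mul, Matrix.transpose_transpose, Matrix.transpose_sub,
      Matrix.transpose_one, ← hU, ← hV, Matrix.mul_assoc]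
  set D := X - 1 with hD
  set T := Xᵀ - 1 with hT
  have step1 : SpJ g * emb hng X = SpJ g + U * (SpJ n * D) * V := by
    rw [emb, Matrix.mul_add, Matrix.mul_one]
    congr 1
    calc SpJ g * (U * D * V) = (SpJ g * U) * (D * V) := by simp only [Matrix.mul_assoc]
    _ = U * SpJ n * (D * V) := by rw [hJU]
    _ = U * (SpJ n * D) * V := by simp only [Matrix.mul_assoc]
  have step2 : (emb hng X)ᵀ * (SpJ g + U * (SpJ n * D) * V)
      = SpJ g + U * (SpJ n * D + T * SpJ n + T * (SpJ n * D)) * V := by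
    rw [hTr, Matrix.add_mul, Matrix.one_mul, Matrix.mul_add]
    have e1 : U * T * V * SpJ g = U * (T * SpJ n) * V := by
      calc U * T * V * SpJ g = U * (T * (V * SpJ g)) := by simp only [Matrix.mul_assoc]
      _ = U * (T * (SpJ n * V)) := by rw [hVJ]
      _ = U * (T * SpJ n) * V := by simp only [Matrix.mul_assoc]
    have e2 : U * T * V * (U * (SpJ n * D) * V) = U * (T * (SpJ n * D)) * V := by
      calc U * T * V * (U * (SpJ n * D) * V)
          = U * (T * ((V * U) * ((SpJ n * D) * V))) := by simp only [Matrix.mul_assoc]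
      _ = U * (T * ((SpJ n * D) * V)) := by rw [hVU, Matrix.one_mul]
      _ = U * (T * (SpJ n * D)) * V := by simp only [Matrix.mul_assoc]
    rw [e1, e2]
    simp only [Matrix.add_mul, Matrix.mul_add]
    abel
  have hinner : SpJ n * D + T * SpJ n + T * (SpJ n * D) = 0 := by
    have hX' : Xᵀ * SpJ n * X - SpJ n = 0 := by rw [hX, sub_self]
    rw [hD, hT]
    calc SpJ n * (X - 1) + (Xᵀ - 1) * SpJ n + (Xᵀ - 1) * (SpJ n * (X - 1))
        = Xᵀ * SpJ n * X - SpJ n := by noncomm_ring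
    _ = 0 := hX'
  rw [Matrix.mul_assoc, step1, step2, hinner, Matrix.mul_zero, Matrix.zero_mul, add_zero]

lemma emb_entry (X : Matrix (Fin n ⊕ Fin n) (Fin n ⊕ Fin n) ℤ) (c d : Fin n ⊕ Fin n) :
    (Q hng * X * (Q hng)ᵀ) (Sum.map (Fin.castLE hng) (Fin.castLE hng) c)
        (Sum.map (Fin.castLE hng) (Fin.castLE hng) d) = X c d := by
  have hQap : ∀ (r : Fin g ⊕ Fin g) (c' : Fin n ⊕ Fin n),
      Q hng r c' = if r = Sum.map (Fin.castLE hng) (Fin.castLE hng) c' then 1 else 0 := by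
    intro r c'
    rcases r with r | r <;> rcases c' with k | k
    · simp only [Q, Matrix.fromBlocks_apply₁₁, Sum.map_inl, E]
      rcases eq_or_ne r (Fin.castLE hng k) with h | h
      · simp [h]
      · simp [h, Fin.ext_iff]
        exact fun hc => h (Fin.ext hc)
    · simp only [Q, Matrix.fromBlocks_apply₁₂, Sum.map_inr, Matrix.zero_apply]
      simp
    · simp only [Q, Matrix.fromBlocks_apply₂₁, Sum.map_inl, Matrix.zero_apply]
      simp
    · simp only [Q, Matrix.fromBlocks_apply₂₂, Sum.map_inr, E]
      rcases eq_or_ne r (Fin.castLE hng k) with h | h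
      · simp [h]
      · simp [h, Fin.ext_iff]
        exact fun hc => h (Fin.ext hc)
  have hinj : Function.Injective (Sum.map (Fin.castLE hng) (Fin.castLE hng)) :=
    Function.Injective.sumMap (Fin.castLE_injective hng) (Fin.castLE_injective hng)
  rw [Matrix.mul_assoc, Matrix.mul_apply,
    Finset.sum_eq_single_of_mem c (Finset.mem_univ _)]
  · rw [hQap, if_pos rfl, one_mul, Matrix.mul_apply,
      Finset.sum_eq_single_of_mem d (Finset.mem_univ _)]
    · rw [Matrix.transpose_apply, hQap, if_pos rfl, mul_one]
    · intro d' _ hd'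
      rw [Matrix.transpose_apply, hQap, if_neg (fun h => hd' (hinj h).symm), mul_zero]
  · intro c' _ hc'
    rw [hQap, if_neg (fun h => hc' (hinj h).symm), zero_mul]

end Embed

theorem bwd (g m : ℕ) (hg : 1 ≤ g) (hm : 0 < m) (p : ℕ) (hp : p.Prime) (hpm : p ∣ m)
    (hpg : p ≤ 2 * g + 1) :
    ∃ A : Matrix (Fin g ⊕ Fin g) (Fin g ⊕ Fin g) ℤ,
      Aᵀ * SpJ g * A = SpJ g ∧ A ≠ 1 ∧ A ^ m = 1 := by
  rcases eq_or_ne p 2 with h2 | h2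
  · refine ⟨-1, ?_, ?_, ?_⟩
    · simp
    · intro h
      have h1 := congrFun (congrFun h (Sum.inl (⟨0, hg⟩ : Fin g))) (Sum.inl (⟨0, hg⟩ : Fin g))
      rw [Matrix.neg_apply, Matrix.one_apply_eq] at h1
      omega
    · obtain ⟨t, ht⟩ : 2 ∣ m := h2 ▸ hpm
      have hev : Even m := ⟨t, by omega⟩
      exact hev.neg_one_pow
  · have hodd : p % 2 = 1 := Nat.odd_iff.mp (hp.odd_of_ne_two h2)
    have hp2 : 2 ≤ p := hp.two_le
    set n := (p - 1) / 2 with hn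
    have hpn : p = 2 * n + 1 := by omega
    have hn0 : 0 < n := by omega
    have hng : n ≤ g := by omega
    refine ⟨emb hng (S n), emb_symplectic hng (S n) (SJS n hn0), ?_, ?_⟩
    · intro h
      have h1 := congrFun (congrFun h
        (Sum.map (Fin.castLE hng) (Fin.castLE hng) (Sum.inl (⟨0, hn0⟩ : Fin n))))
        (Sum.map (Fin.castLE hng) (Fin.castLE hng) (Sum.inl (⟨0, hn0⟩ : Fin n)))
      rw [emb, Matrix.add_apply, Matrix.one_apply_eq, emb_entry] at h1
      have h3 : (S n - 1) (Sum.inl (⟨0, hn0⟩ : Fin n)) (Sum.inl (⟨0, hn0⟩ : Fin n)) = -1 := by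
        rw [Matrix.sub_apply, Matrix.one_apply_eq]
        show (0:ℤ) - 1 = -1
        norm_num
      rw [h3] at h1
      omega
    · obtain ⟨t, ht⟩ := hpm
      have hSm : (S n)^m = 1 := by
        rw [ht, hpn, pow_mul, Spow_eq_one n hn0, one_pow]
      rw [emb_pow hng, hSm, sub_self, Matrix.mul_zero, Matrix.zero_mul, add_zero]

end SympAux

open Polynomial in
theorem fwd (g m : ℕ) (hg : 1 ≤ g) (hm : 0 < m)
    (A : Matrix (Fin g ⊕ Fin g) (Fin g ⊕ Fin g) ℤ) (hA1 : A ≠ 1) (hAm : A ^ m = 1) :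
    ∃ p : ℕ, p.Prime ∧ p ∣ m ∧ p ≤ 2 * g + 1 := by
  haveI : NeZero g := ⟨by omega⟩
  haveI : Nonempty (Fin g ⊕ Fin g) := ⟨Sum.inl ⟨0, hg⟩⟩
  set φ : Matrix (Fin g ⊕ Fin g) (Fin g ⊕ Fin g) ℤ →+* Matrix (Fin g ⊕ Fin g) (Fin g ⊕ Fin g) ℚ :=
    (Int.castRingHom ℚ).mapMatrix with hφ
  set Aq : Matrix (Fin g ⊕ Fin g) (Fin g ⊕ Fin g) ℚ := φ A with hAq
  have hAq1 : Aq ≠ 1 := by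
    intro h
    apply hA1
    have hinj : Function.Injective φ := by
      intro x y hxy
      ext i j
      have h2 := congrFun (congrFun (congrArg (fun (M : Matrix (Fin g ⊕ Fin g) (Fin g ⊕ Fin g) ℚ) => M) hxy) i) j
      simp only [hφ, RingHom.mapMatrix_apply, Matrix.map_apply, Int.coe_castRingHom] at h2
      exact_mod_cast h2
    apply hinj
    rw [← hAq, h, _root_.map_one]
  have hAqm : Aq ^ m = 1 := by rw [hAq, ← map_pow, hAm, _root_.map_one]
  have hInt : IsIntegral ℚ Aq := Matrix.isIntegral Aq
  set q := minpoly ℚ Aq with hqdef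
  have hq_dvd : q ∣ X ^ m - 1 := by
    apply minpoly.dvd
    simp [map_sub, map_pow, aeval_X, hAqm]
  have hsep : (X ^ m - 1 : ℚ[X]).Separable :=
    X_pow_sub_one_separable_iff.mpr (by exact_mod_cast hm.ne')
  have hsf : Squarefree q := (hsep.squarefree).squarefree_of_dvd hq_dvd
  have hq0 : q ≠ 0 := minpoly.ne_zero hInt
  have hq_ne_unit : ¬ IsUnit q := by
    intro h
    have h1 := minpoly.natDegree_pos hInt
    have h2 := Polynomial.natDegree_eq_zero_of_isUnit h
    rw [← hqdef] at h1
    omega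
  have hT1 : ((1:ℚ[X]) : ℚ[X]) = C 1 := by simp
  have htmon : (X - 1 : ℚ[X]).Monic := by
    have := monic_X_sub_C (1:ℚ)
    simpa using this
  -- find q₂ dividing q and X^m-1, not divisible by X-1, nonunit
  have key : ∃ q₂ : ℚ[X], q₂ ∣ q ∧ ¬ (X - 1 : ℚ[X]) ∣ q₂ ∧ ¬ IsUnit q₂ ∧ q₂ ≠ 0 := by
    by_cases hdvd : (X - 1 : ℚ[X]) ∣ q
    · obtain ⟨q₂, hq₂⟩ := hdvd
      refine ⟨q₂, ⟨X - 1, by rw [hq₂]; ring⟩, ?_, ?_, ?_⟩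
      · intro ⟨s, hs⟩
        have : (X - 1 : ℚ[X]) * (X - 1) ∣ q := ⟨s, by rw [hq₂, hs]; ring⟩
        have := hsf _ this
        have h2 := Polynomial.natDegree_eq_zero_of_isUnit this
        have h3 : (X - 1 : ℚ[X]).natDegree = 1 := by
          simpa using natDegree_X_sub_C (1:ℚ)
        omega
      · intro hu
        have hassoc : Associated (X - 1 : ℚ[X]) q := by
          rw [hq₂]
          exact (associated_mul_unit_left _ _ hu).symm
        have heq : q = X - 1 :=
          (Polynomial.eq_of_monic_of_associated (hqdef ▸ minpoly.monic hInt) htmon hassoc.symm)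
        have h0 : aeval Aq q = Aq - 1 := by rw [heq]; simp
        rw [hqdef, minpoly.aeval] at h0
        exact hAq1 (sub_eq_zero.mp h0.symm)
      · intro h; rw [h, mul_zero] at hq₂; exact hq0 hq₂
    · exact ⟨q, dvd_refl q, hdvd, hq_ne_unit, hq0⟩
  obtain ⟨q₂, hq₂_dvd_q, ht2, hq₂_nu, hq₂0⟩ := key
  obtain ⟨r, hr_irr, hr_dvd⟩ := WfDvdMonoid.exists_irreducible_factor hq₂_nu hq₂0
  have hr0 : r ≠ 0 := hr_irr.ne_zero
  set r' : ℚ[X] := r * C r.leadingCoeff⁻¹ with hr'def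
  have hr'mon : r'.Monic := monic_mul_leadingCoeff_inv hr0
  have hassoc_rr' : Associated r r' :=
    (associated_mul_unit_left r _
      (isUnit_C.mpr (IsUnit.inv (isUnit_iff_ne_zero.mpr (leadingCoeff_ne_zero.mpr hr0))))).symm
  have hr'_irr : Irreducible r' := hassoc_rr'.irreducible hr_irr
  have hr'_dvd_q₂ : r' ∣ q₂ := hassoc_rr'.symm.dvd.trans hr_dvd
  haveI : Fact (Irreducible r') := ⟨hr'_irr⟩
  set K := AdjoinRoot r'
  set ζ : K := AdjoinRoot.root r' with hζdef
  have hmin : minpoly ℚ ζ = r' :=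
    (minpoly.eq_of_irreducible_of_monic hr'_irr (AdjoinRoot.eval₂_root r') hr'mon).symm
  have haev : aeval ζ r' = 0 := by
    have := minpoly.aeval ℚ ζ
    rwa [hmin] at this
  have hr'_dvd_pow : r' ∣ (X ^ m - 1 : ℚ[X]) := hr'_dvd_q₂.trans (hq₂_dvd_q.trans hq_dvd)
  have hζm : ζ ^ m = 1 := by
    obtain ⟨s, hs⟩ := hr'_dvd_pow
    have h0 : aeval ζ (X ^ m - 1 : ℚ[X]) = 0 := by rw [hs, _root_.map_mul, haev, zero_mul]
    have h1 : ζ ^ m - 1 = 0 := by simpa using h0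
    exact sub_eq_zero.mp h1
  set d := orderOf ζ with hddef
  have hfin : IsOfFinOrder ζ := isOfFinOrder_iff_pow_eq_one.mpr ⟨m, hm, hζm⟩
  have hdpos : 0 < d := hfin.orderOf_pos
  have hd_dvd_m : d ∣ m := orderOf_dvd_of_pow_eq_one hζm
  have hd1 : d ≠ 1 := by
    intro h
    have hζ1 : ζ = 1 := orderOf_eq_one_iff.mp h
    have : minpoly ℚ (1 : K) = X - 1 := by
      have := minpoly.eq_X_sub_C K (1 : ℚ)
      simpa using this
    rw [hζ1, this] at hmin
    exact ht2 (hmin ▸ hr'_dvd_q₂)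
  have hprim : IsPrimitiveRoot ζ d := IsPrimitiveRoot.orderOf ζ
  have hcyc : cyclotomic d ℚ = r' := by
    rw [cyclotomic_eq_minpoly_rat hprim hdpos, hmin]
  have hdeg_r' : r'.natDegree = Nat.totient d := by
    rw [← hcyc, natDegree_cyclotomic]
  -- degree bound
  have hq_dvd_char : q ∣ Aq.charpoly := minpoly.dvd ℚ Aq (Matrix.aeval_self_charpoly Aq)
  have hchar0 : Aq.charpoly ≠ 0 := (Matrix.charpoly_monic Aq).ne_zero
  have hr'_dvd_char : r' ∣ Aq.charpoly := (hr'_dvd_q₂.trans hq₂_dvd_q).trans hq_dvd_char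
  have hdegle : r'.natDegree ≤ Aq.charpoly.natDegree :=
    Polynomial.natDegree_le_of_dvd hr'_dvd_char hchar0
  have hchardeg : Aq.charpoly.natDegree = 2 * g := by
    rw [Matrix.charpoly_natDegree_eq_dim]
    simp only [Fintype.card_sum, Fintype.card_fin]
    omega
  have htot : Nat.totient d ≤ 2 * g := by
    rw [← hdeg_r']; omega
  refine ⟨d.minFac, Nat.minFac_prime hd1, (d.minFac_dvd).trans hd_dvd_m, ?_⟩
  have h1 : Nat.totient d.minFac ∣ Nat.totient d := Nat.totient_dvd_of_dvd d.minFac_dvd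
  have h2 : Nat.totient d.minFac = d.minFac - 1 := Nat.totient_prime (Nat.minFac_prime hd1)
  have h3 : 0 < Nat.totient d := Nat.totient_pos.mpr hdpos
  have h4 : Nat.totient d.minFac ≤ Nat.totient d := Nat.le_of_dvd h3 h1
  have h5 : 2 ≤ d.minFac := (Nat.minFac_prime hd1).two_le
  omega

theorem stmt_0 (g m : ℕ) (hg : 1 ≤ g) (hm : 0 < m) :
    (∃ A : Matrix (Fin g ⊕ Fin g) (Fin g ⊕ Fin g) ℤ,
        IsSymplectic g A ∧ A ≠ 1 ∧ A ^ m = 1) ↔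
      ∃ p : ℕ, p.Prime ∧ p ∣ m ∧ p ≤ 2 * g + 1 := by
  constructor
  · rintro ⟨A, _, hA1, hAm⟩
    exact fwd g m hg hm A hA1 hAm
  · rintro ⟨p, hp, hpm, hpg⟩
    obtain ⟨A, h1, h2, h3⟩ := SympAux.bwd g m hg hm p hp hpm hpg
    exact ⟨A, h1, h2, h3⟩
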